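/- For n ≥ 2, let σ_i = (1 2 … i) ∈ S_n for 2 ≤ i ≤ n, and let ν_i denote the uniform distribution on the cyclic subgroup ⟨σ_i⟩ = {id, σ_i, σ_i², …, σ_i^{i-1}}. Then the iterated convolution ν_n * ν_{n-1} * ⋯ * ν_2 equals the uniform distribution on all of S_n. (Thus the scramble shuffle on n cards can be realized by a sequence of random cuts on 2, 3, …, n cards.) -/

import Mathlib

open Finset

variable {G : Type*} [Group G] [Fintype G] [DecidableEq G]

/-- Convolution of two mass functions on a finite group:
`(μ * ν)(g) = ∑ h, μ(h) · ν(h⁻¹ g)`. -/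
def convol (μ ν : G → ℝ) : G → ℝ := fun g => ∑ h : G, μ h * ν (h⁻¹ * g)

/-- Point mass `δ_π`. -/
def delta (π : G) : G → ℝ := fun g => if g = π then 1 else 0

/-- Uniform distribution on a finite subset `S`: probability `1/|S|` on each
element of `S` and `0` elsewhere. -/
noncomputable def unif (S : Finset G) : G → ℝ := fun g => if g ∈ S then (S.card : ℝ)⁻¹ else 0

/-- Iterated convolution `μ₁ * μ₂ * ⋯ * μ_r` of a list of mass functions
(the empty list yields the point mass at the identity, a neutral element
for convolution). -/
noncomputable def convList (L : List (G → ℝ)) : G → ℝ := L.foldr convol (delta 1)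

/-- `μ` is a probability mass function on the finite group `G`. -/
def IsPMF (μ : G → ℝ) : Prop := (∀ g, 0 ≤ μ g) ∧ ∑ g, μ g = 1

open Pointwise in
lemma convol_unif_unif (S T : Finset G)
    (hinj : Set.InjOn (fun p : G × G => p.1 * p.2) ((S : Set G) ×ˢ (T : Set G))) :
    convol (unif S) (unif T) = unif (S * T) := by
  funext g
  unfold convol unif
  by_cases hg : g ∈ S * T
  · obtain ⟨s, hs, t, ht, hst⟩ := Finset.mem_mul.mp hg
    rw [if_pos hg, Finset.sum_eq_single s]
    · have h2 : s⁻¹ * g ∈ T := by rw [← hst]; simpa using ht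
      rw [if_pos hs, if_pos h2, Finset.card_mul_iff.mpr hinj]
      push_cast
      rw [mul_inv]
    · intro h _ hne
      by_cases h1 : h ∈ S
      · by_cases h2 : h⁻¹ * g ∈ T
        · exfalso
          apply hne
          have hmem1 : ((h, h⁻¹ * g) : G × G) ∈ (S : Set G) ×ˢ (T : Set G) := by
            simp [h1, h2]
          have hmem2 : ((s, t) : G × G) ∈ (S : Set G) ×ˢ (T : Set G) := by
            simp [hs, ht]
          have := hinj hmem1 hmem2 (by simp [hst])
          exact congrArg Prod.fst this
        · simp [h2]
      · simp [h1]
    · intro hs'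
      exact absurd (Finset.mem_univ s) hs'
  · rw [if_neg hg]
    apply Finset.sum_eq_zero
    intro h _
    by_cases h1 : h ∈ S
    · by_cases h2 : h⁻¹ * g ∈ T
      · exact absurd (by simpa using Finset.mul_mem_mul h1 h2) hg
      · simp [h2]
    · simp [h1]

lemma unif_singleton_one : unif ({1} : Finset G) = delta 1 := by
  funext g
  simp [unif, delta]

lemma cr_pow_apply {m : ℕ} (i : Fin (m+1)) (a : ℕ) (j : Fin (m+1)) (hj : j ≤ i) :
    (Fin.cycleRange i ^ a) j =
      ⟨(j.val + a) % (i.val + 1), lt_of_le_of_lt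
        (Nat.le_of_lt_succ (Nat.mod_lt _ (Nat.succ_pos _))) i.isLt⟩ := by
  induction a with
  | zero =>
    simp only [pow_zero, Equiv.Perm.coe_one, id_eq]
    have hji : j.val ≤ i.val := hj
    apply Fin.ext
    show j.val = (j.val + 0) % (i.val + 1)
    have h0 : (j.val + 0) % (i.val + 1) = j.val := by
      rw [Nat.add_zero]; exact Nat.mod_eq_of_lt (by omega)
    exact h0.symm
  | succ a ih =>
    rw [pow_succ', Equiv.Perm.mul_apply, ih]
    set x := (j.val + a) % (i.val + 1) with hx
    have hxle : x < i.val + 1 := Nat.mod_lt _ (Nat.succ_pos _)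
    have hmod : (j.val + (a+1)) % (i.val + 1) = (x + 1) % (i.val + 1) := by
      rw [← Nat.add_assoc, hx, Nat.mod_add_mod]
    rcases lt_or_eq_of_le (Nat.le_of_lt_succ hxle) with hlt | heq
    · rw [Fin.cycleRange_of_lt (by exact hlt : (⟨x, _⟩ : Fin (m+1)) < i)]
      apply Fin.ext
      have h1 : (x + 1) % (i.val + 1) = x + 1 := Nat.mod_eq_of_lt (by omega)
      simp [Fin.add_def, hmod, h1, Nat.mod_eq_of_lt (show x + 1 < m + 1 by omega)]
    · have : (⟨x, lt_of_le_of_lt (Nat.le_of_lt_succ hxle) i.isLt⟩ : Fin (m+1)) = i :=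
        Fin.ext heq
      rw [this, Fin.cycleRange_self]
      apply Fin.ext
      simp [hmod, heq, Nat.mod_self]

lemma cr_pow_apply_gt {m : ℕ} (i j : Fin (m+1)) (h : i < j) (a : ℕ) :
    (Fin.cycleRange i ^ a) j = j := by
  induction a with
  | zero => simp
  | succ a ih => rw [pow_succ', Equiv.Perm.mul_apply, ih, Fin.cycleRange_of_gt h]

def Hn (m k : ℕ) : Finset (Equiv.Perm (Fin (m+1))) :=
  Finset.univ.filter (fun g => ∀ j : Fin (m+1), k < j.val → g j = j)

lemma mem_Hn {m k : ℕ} {g : Equiv.Perm (Fin (m+1))} :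
    g ∈ Hn m k ↔ ∀ j : Fin (m+1), k < j.val → g j = j := by
  simp [Hn]

lemma mod_helper {k a : ℕ} (ha : a ≤ k) :
    (k + a) % (k + 1) = if a = 0 then k else a - 1 := by
  split_ifs with h
  · subst h; exact Nat.mod_eq_of_lt (by omega)
  · have : k + a = (k + 1) + (a - 1) := by omega
    rw [this, Nat.add_mod_left, Nat.mod_eq_of_lt (by omega)]

lemma cr_pow_inv_apply_gt {m : ℕ} (i j : Fin (m+1)) (h : i < j) (a : ℕ) :
    (Fin.cycleRange i ^ a)⁻¹ j = j := by
  conv_lhs => rw [← cr_pow_apply_gt i j h a]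
  exact Equiv.symm_apply_apply _ _

open Pointwise in
lemma step_mul {m : ℕ} (i : Fin (m+1)) (hi : 1 ≤ i.val) :
    ((Finset.range (i.val+1)).image (fun j => Fin.cycleRange i ^ j)) * (Hn m (i.val - 1))
      = Hn m i.val := by
  ext g
  constructor
  · intro hg
    obtain ⟨x, hx, h, hh, hxh⟩ := Finset.mem_mul.mp hg
    obtain ⟨a, _, rfl⟩ := Finset.mem_image.mp hx
    rw [mem_Hn]
    intro j hj
    rw [← hxh, Equiv.Perm.mul_apply, mem_Hn.mp hh j (by omega),
      cr_pow_apply_gt i j (by exact hj : i < j)]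
  · intro hg
    rw [mem_Hn] at hg
    set k := i.val with hk
    have hti : (g i).val ≤ k := by
      by_contra hcon
      push_neg at hcon
      have h1 : g (g i) = g i := hg (g i) hcon
      have h2 : g i = i := g.injective h1
      omega
    set a := ((g i).val + 1) % (k + 1) with ha
    have hak : a < k + 1 := Nat.mod_lt _ (Nat.succ_pos _)
    have hsig : (Fin.cycleRange i ^ a) i = g i := by
      rw [cr_pow_apply i a i le_rfl]
      apply Fin.ext
      show (k + a) % (k + 1) = (g i).val
      rw [ha, Nat.add_mod_mod]
      have : k + ((g i).val + 1) = (k + 1) + (g i).val := by omega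
      rw [this, Nat.add_mod_left, Nat.mod_eq_of_lt (by omega)]
    refine Finset.mem_mul.mpr ⟨Fin.cycleRange i ^ a,
      Finset.mem_image.mpr ⟨a, Finset.mem_range.mpr hak, rfl⟩,
      (Fin.cycleRange i ^ a)⁻¹ * g, ?_, by group⟩
    rw [mem_Hn]
    intro j hj
    have hkj : k ≤ j.val := by omega
    rcases lt_or_eq_of_le hkj with hlt | heq
    · rw [Equiv.Perm.mul_apply, hg j hlt, cr_pow_inv_apply_gt i j (by exact hlt)]
    · have hji : j = i := Fin.ext heq.symm
      subst hji
      rw [Equiv.Perm.mul_apply, ← hsig]; exact Equiv.symm_apply_apply _ _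

lemma step_inj {m : ℕ} (i : Fin (m+1)) (hi : 1 ≤ i.val) :
    Set.InjOn (fun p : Equiv.Perm (Fin (m+1)) × Equiv.Perm (Fin (m+1)) => p.1 * p.2)
      ((((Finset.range (i.val+1)).image (fun j => Fin.cycleRange i ^ j)) : Set _) ×ˢ
        ((Hn m (i.val - 1)) : Set _)) := by
  rintro ⟨x, h⟩ ⟨hx, hh⟩ ⟨y, h'⟩ ⟨hy, hh'⟩ heq
  simp only [Finset.coe_image, Set.mem_image, Finset.coe_range, Set.mem_Iio] at hx hy
  obtain ⟨a, haa, rfl⟩ := hx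
  obtain ⟨b, hbb, rfl⟩ := hy
  simp only at heq
  have hh2 := mem_Hn.mp (by exact_mod_cast hh) i (by omega)
  have hh2' := mem_Hn.mp (by exact_mod_cast hh') i (by omega)
  have happ : (Fin.cycleRange i ^ a) i = (Fin.cycleRange i ^ b) i := by
    have e1 : (Fin.cycleRange i ^ a * h) i = (Fin.cycleRange i ^ b * h') i := by rw [heq]
    rwa [Equiv.Perm.mul_apply, Equiv.Perm.mul_apply, hh2, hh2'] at e1
  rw [cr_pow_apply i a i le_rfl, cr_pow_apply i b i le_rfl] at happ
  have hval : (i.val + a) % (i.val + 1) = (i.val + b) % (i.val + 1) :=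
    congrArg Fin.val happ
  rw [mod_helper (by omega), mod_helper (by omega)] at hval
  have hab : a = b := by split_ifs at hval <;> omega
  subst hab
  have : h = h' := mul_left_cancel heq
  simp [this]

lemma Hn_zero (m : ℕ) : Hn m 0 = {1} := by
  ext g
  rw [mem_Hn, Finset.mem_singleton]
  constructor
  · intro hg
    have h0 : g 0 = 0 := by
      by_contra hne
      have hpos : 0 < (g 0).val :=
        Nat.pos_of_ne_zero (fun h => hne (Fin.ext (by simpa using h)))
      have h1 : g (g 0) = g 0 := hg (g 0) hpos
      exact hne (g.injective h1)
    apply Equiv.ext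
    intro j
    show g j = j
    by_cases hj : 0 < j.val
    · exact hg j hj
    · have hj0 : j = 0 := Fin.ext (by simp only [Fin.val_zero]; omega)
      rw [hj0, h0]
  · rintro rfl j _
    simp

lemma Hn_top (m : ℕ) : Hn m m = Finset.univ := by
  ext g
  simp only [Finset.mem_univ, iff_true, mem_Hn]
  intro j hj
  exact absurd j.isLt (by omega)

lemma key (m : ℕ) : ∀ k, k ≤ m →
    convList ((((List.finRange m).take k).map
      (fun i : Fin m => unif ((Finset.range ((Fin.succ i).val + 1)).image
        (fun j => Fin.cycleRange (Fin.succ i) ^ j)))).reverse)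
      = unif (Hn m k) := by
  intro k
  induction k with
  | zero =>
    intro _
    rw [Hn_zero, unif_singleton_one]
    rfl
  | succ k ih =>
    intro hk
    have hkm : k < m := hk
    have hgE : (List.finRange m)[k]? = some ⟨k, hkm⟩ := by
      rw [List.getElem?_eq_getElem (by simpa using hkm)]
      simp
    rw [List.take_succ, hgE]
    simp only [Option.toList_some, List.map_append, List.map_cons, List.map_nil,
      List.reverse_append, List.reverse_cons, List.reverse_nil, List.nil_append,
      List.singleton_append]
    have hcons : ∀ (a : Equiv.Perm (Fin (m+1)) → ℝ) (L : List (Equiv.Perm (Fin (m+1)) → ℝ)),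
        convList (a :: L) = convol a (convList L) := fun _ _ => rfl
    rw [hcons, ih (by omega)]
    have hval : (Fin.succ (⟨k, hkm⟩ : Fin m)).val = k + 1 := rfl
    rw [convol_unif_unif _ _ (by
      have := step_inj (m := m) (Fin.succ ⟨k, hkm⟩) (by rw [hval]; omega)
      rwa [hval, Nat.add_sub_cancel] at this)]
    have := step_mul (m := m) (Fin.succ ⟨k, hkm⟩) (by rw [hval]; omega)
    rw [hval, Nat.add_sub_cancel] at this
    rw [hval, this]

theorem stmt11 (n : ℕ) (hn : 2 ≤ n) :
    convList (((List.finRange n).reverse.map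
      (fun i : Fin n => unif ((Finset.range (i.val + 1)).image
        (fun j => Fin.cycleRange i ^ j)))).dropLast)
    = unif (Finset.univ : Finset (Equiv.Perm (Fin n))) := by
  obtain ⟨m, rfl⟩ : ∃ m, n = m + 1 := ⟨n - 1, by omega⟩
  set f := fun i : Fin (m+1) => unif ((Finset.range (i.val + 1)).image
      (fun j => Fin.cycleRange i ^ j)) with hf
  have e1 : ((List.finRange (m+1)).reverse.map f).dropLast
      = ((List.finRange m).map (fun i : Fin m => f i.succ)).reverse := by
    have h := List.tail_reverse (l := (List.finRange (m+1)).reverse.map f)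
    have h2 : ((List.finRange (m+1)).reverse.map f).dropLast
        = (((List.finRange (m+1)).reverse.map f).reverse.tail).reverse := by
      rw [h, List.reverse_reverse]
    rw [h2, List.map_reverse, List.reverse_reverse]
    congr 1
    rw [List.finRange_succ]
    simp [List.map_map, Function.comp]
  rw [e1]
  have e2 : (List.finRange m) = (List.finRange m).take m := by
    rw [List.take_of_length_le (by simp)]
  rw [e2, key m m le_rfl, Hn_top]
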